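/- Let N ≥ 6 and γ > 0, and let P := {(y', y_N) ∈ ℝ^{N−1}×ℝ : y_N > 0, |y'| < γ √y_N} be a round paraboloid. Then the Newtonian potential V_P(x) = α_N ∫_P |x−y|^{2−N} dy satisfies sup_{x ∈ ℝ^N, |x| ≥ k, x_N ≤ k/2} V_P(x) → 0 as k → ∞. -/

import Mathlib

open MeasureTheory Metric Set Filter

private lemma stmt7_coord_le_norm {N : ℕ} (z : EuclideanSpace ℝ (Fin N)) (i : Fin N) :
    |z i| ≤ ‖z‖ := by
  rw [EuclideanSpace.norm_eq, ← Real.sqrt_sq_eq_abs]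
  apply Real.sqrt_le_sqrt
  have := Finset.single_le_sum (f := fun j => ‖z j‖^2) (fun j _ => sq_nonneg _) (Finset.mem_univ i)
  simpa [Real.norm_eq_abs, sq_abs] using this

private lemma stmt7_norm_sq_eq {N : ℕ} (z : EuclideanSpace ℝ (Fin N)) :
    ‖z‖^2 = ∑ i, (z i)^2 := by
  rw [EuclideanSpace.norm_eq, Real.sq_sqrt (Finset.sum_nonneg fun i _ => by positivity)]
  exact Finset.sum_congr rfl fun i _ => by simp [Real.norm_eq_abs, sq_abs]

private lemma stmt7_volume_box {N : ℕ} (c d : Fin N → ℝ) :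
    volume {y : EuclideanSpace ℝ (Fin N) | ∀ i, y i ∈ Icc (c i) (d i)} =
      ∏ i, ENNReal.ofReal (d i - c i) := by
  have hpre : {y : EuclideanSpace ℝ (Fin N) | ∀ i, y i ∈ Icc (c i) (d i)} =
      ((MeasurableEquiv.toLp 2 (Fin N → ℝ)).symm) ⁻¹' (Set.pi univ fun i => Icc (c i) (d i)) := by
    ext y
    simp [Set.mem_pi, Pi.le_def, forall_and]
  rw [hpre, (EuclideanSpace.volume_preserving_symm_measurableEquiv_toLp (Fin N)).measure_preimage
      (MeasurableSet.univ_pi fun i => measurableSet_Icc).nullMeasurableSet,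
    volume_pi_pi]
  simp [Real.volume_Icc]

private lemma stmt7_sqrt_two_pow (j : ℕ) : Real.sqrt (2^j) = (Real.sqrt 2)^j := by
  induction j with
  | zero => simp
  | succ n ih => rw [pow_succ, pow_succ, Real.sqrt_mul (by positivity), ih]

private lemma stmt7_key_bound (m : ℕ) (hm : 4 ≤ m) (γ s : ℝ) (hγ : 0 < γ) (hs : 1 ≤ s) :
    ((s^2/2)^m)⁻¹ * ((2*γ*(Real.sqrt 2 * s))^(m+1) * (2*s^2)) ≤
      (2^m * (2*Real.sqrt 2*γ)^(m+1) * 2) * s⁻¹ := by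
  have hs0 : 0 < s := lt_of_lt_of_le one_pos hs
  have h2 : (0:ℝ) < Real.sqrt 2 := by positivity
  have h1 : (2*γ*(Real.sqrt 2 * s))^(m+1) = (2*Real.sqrt 2*γ)^(m+1) * s^(m+1) := by
    rw [← mul_pow]; ring_nf
  have ha : (0:ℝ) < (2*Real.sqrt 2*γ)^(m+1) := by positivity
  rw [h1]
  have hpow : s^(m+3) * s ≤ s^(2*m) := by
    calc s^(m+3) * s = s^(m+4) := by ring
    _ ≤ s^(2*m) := pow_le_pow_right₀ hs (by omega)
  rw [div_pow, ← pow_mul]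
  rw [inv_div, div_mul_eq_mul_div, div_le_iff₀ (by positivity)]
  have e1 : (2:ℝ)^m * ((2*Real.sqrt 2*γ)^(m+1) * s^(m+1) * (2*s^2)) =
      (2^m*(2*Real.sqrt 2*γ)^(m+1)*2*s⁻¹) * (s^(m+3) * s) := by
    field_simp; ring
  have e2 : (2:ℝ)^m * (2*Real.sqrt 2*γ)^(m+1) * 2 * s⁻¹ * s^(2*m) =
      (2^m*(2*Real.sqrt 2*γ)^(m+1)*2*s⁻¹) * s^(2*m) := by ring
  calc (2:ℝ)^m * ((2*Real.sqrt 2*γ)^(m+1) * s^(m+1) * (2*s^2)) =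
      (2^m*(2*Real.sqrt 2*γ)^(m+1)*2*s⁻¹) * (s^(m+3) * s) := e1
    _ ≤ (2^m*(2*Real.sqrt 2*γ)^(m+1)*2*s⁻¹) * s^(2*m) :=
        mul_le_mul_of_nonneg_left hpow (by positivity)
    _ = 2^m * (2*Real.sqrt 2*γ)^(m+1) * 2 * s⁻¹ * s^(2*m) := e2.symm

set_option maxHeartbeats 1000000 in
/-- Decay of the Newtonian potential of a round paraboloid
`P = {y_N > 0, |y'| < γ √y_N}` in the region `{|x| ≥ k, x_N ≤ k/2}`:
`sup V_P → 0` as `k → ∞`. -/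
theorem stmt_7 (N : ℕ) (hN : 6 ≤ N) (γ : ℝ) (hγ : 0 < γ)
    (P : Set (EuclideanSpace ℝ (Fin N)))
    (hP : P = {y : EuclideanSpace ℝ (Fin N) |
      0 < y (⟨N - 1, by omega⟩ : Fin N) ∧
      (∑ i ∈ Finset.univ.erase (⟨N - 1, by omega⟩ : Fin N), (y i) ^ 2)
        < γ ^ 2 * y (⟨N - 1, by omega⟩ : Fin N)})
    (αN : ℝ)
    (hα : αN = 1 / (N * (N - 2) * (volume (ball (0 : EuclideanSpace ℝ (Fin N)) 1)).toReal))
    (V : EuclideanSpace ℝ (Fin N) → ℝ)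
    (hV : ∀ x, V x = αN * ∫ y in P, ‖x - y‖ ^ ((2 : ℝ) - N)) :
    ∀ ε : ℝ, 0 < ε → ∃ k₀ : ℝ, ∀ k : ℝ, k₀ ≤ k →
      ∀ x : EuclideanSpace ℝ (Fin N), k ≤ ‖x‖ →
        x (⟨N - 1, by omega⟩ : Fin N) ≤ k / 2 → V x ≤ ε := by
  intro ε hε
  have hNR : (6:ℝ) ≤ (N:ℝ) := by exact_mod_cast hN
  have hα0 : 0 ≤ αN := by
    rw [hα]
    apply one_div_nonneg.mpr
    apply mul_nonneg (mul_nonneg (by positivity) (by linarith)) ENNReal.toReal_nonneg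
  set L : Fin N := ⟨N - 1, by omega⟩ with hLdef
  set C : ℝ := 2^(N-2) * (2*Real.sqrt 2*γ)^((N-2)+1) * 2 with hCdef
  have hC0 : 0 < C := by positivity
  refine ⟨max (max 2 (32*γ^2)) ((αN*(4*C)/ε)^2 + 1), ?_⟩
  intro k hk x hxk hxL'
  have hxL : x L ≤ k / 2 := hxL'
  have hk2 : 2 ≤ k := le_trans (le_trans (le_max_left _ _) (le_max_left _ _)) hk
  have hk1 : 1 ≤ k := by linarith
  have hk0 : 0 < k := by linarith
  have hkγ : 32*γ^2 ≤ k := le_trans (le_trans (le_max_right _ _) (le_max_left _ _)) hk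
  have hsqk : αN*(4*C)/ε ≤ Real.sqrt k := by
    have h1 : (αN*(4*C)/ε)^2 ≤ k := by
      have := le_trans (le_max_right _ _) hk; linarith
    have h2 := Real.sqrt_le_sqrt h1
    rwa [Real.sqrt_sq (by positivity)] at h2
  set q : ℝ := (Real.sqrt 2)⁻¹ with hqdef
  have hq0 : 0 ≤ q := by positivity
  set r : ℕ → ℝ := fun j => γ * Real.sqrt (2^(j+1)*k) with hrdef
  have hr0 : ∀ j, 0 ≤ r j := fun j => by rw [hrdef]; positivity
  set lo : ℕ → ℝ := fun j => if j = 0 then 0 else 2^j * k with hlodef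
  have hlo0 : ∀ j, 0 ≤ lo j := by
    intro j; rw [hlodef]; dsimp only; split
    · exact le_refl 0
    · positivity
  set Q : ℕ → Set (EuclideanSpace ℝ (Fin N)) := fun j =>
    {y | (∀ i, i ≠ L → |y i| ≤ r j) ∧
         (∑ i ∈ Finset.univ.erase L, (y i)^2 ≤ γ^2*(2^(j+1)*k)) ∧
         y L ∈ Icc (lo j) (2^(j+1)*k)} with hQdef
  -- covering
  have hcover : P ⊆ ⋃ j, Q j := by
    intro y hy
    rw [hP] at hy
    have hy0 : 0 < y L := hy.1
    have hy1 : ∑ i ∈ Finset.univ.erase L, (y i)^2 < γ^2 * y L := hy.2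
    have hex : ∃ n : ℕ, y L ≤ 2^(n+1)*k := by
      obtain ⟨n, hn⟩ := pow_unbounded_of_one_lt (y L / k) one_lt_two
      refine ⟨n, ?_⟩
      rw [div_lt_iff₀ hk0] at hn
      have h2 : (2:ℝ)^n * k ≤ 2^(n+1)*k := by
        have h3 : (2:ℝ)^n ≤ 2^(n+1) := pow_le_pow_right₀ one_le_two (Nat.le_succ n)
        nlinarith
      linarith
    refine mem_iUnion.mpr ⟨Nat.find hex, ?_⟩
    have hspec : y L ≤ 2^(Nat.find hex + 1)*k := Nat.find_spec hex
    have hlow : lo (Nat.find hex) ≤ y L := by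
      rcases Nat.eq_zero_or_pos (Nat.find hex) with h0 | h1
      · rw [h0, hlodef]; simpa using hy0.le
      · have hne : Nat.find hex ≠ 0 := by omega
        have hmin : ¬ (y L ≤ 2^((Nat.find hex - 1)+1)*k) := Nat.find_min hex (by omega)
        have heq : (Nat.find hex - 1)+1 = Nat.find hex := by omega
        rw [heq] at hmin
        push_neg at hmin
        rw [hlodef]; simp only [if_neg hne]
        exact hmin.le
    have hyb : γ^2 * y L ≤ γ^2 * (2^(Nat.find hex + 1)*k) :=
      mul_le_mul_of_nonneg_left hspec (sq_nonneg γ)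
    refine ⟨?_, le_trans hy1.le hyb, hlow, hspec⟩
    intro i hi
    have h1 : (y i)^2 ≤ ∑ i' ∈ Finset.univ.erase L, (y i')^2 :=
      Finset.single_le_sum (f := fun i' => (y i')^2) (fun _ _ => sq_nonneg _)
        (Finset.mem_erase.mpr ⟨hi, Finset.mem_univ i⟩)
    have h2 : (y i)^2 ≤ γ^2 * (2^(Nat.find hex + 1)*k) := by linarith
    calc |y i| = Real.sqrt ((y i)^2) := (Real.sqrt_sq_eq_abs _).symm
      _ ≤ Real.sqrt (γ^2 * (2^(Nat.find hex + 1)*k)) := Real.sqrt_le_sqrt h2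
      _ = γ * Real.sqrt (2^(Nat.find hex + 1)*k) := by
          rw [Real.sqrt_mul (sq_nonneg γ), Real.sqrt_sq hγ.le]
  -- distance lower bound
  have hdist : ∀ j : ℕ, ∀ y ∈ Q j, 2^j * k/2 ≤ ‖x - y‖ := by
    intro j y hyQ
    obtain ⟨hco, hsq, hyLlo, hyLhi⟩ := hyQ
    have hcoordxy : ∀ i : Fin N, |x i - y i| ≤ ‖x - y‖ := by
      intro i
      have := stmt7_coord_le_norm (x - y) i
      simpa [PiLp.sub_apply] using this
    rcases Nat.eq_zero_or_pos j with h0 | h1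
    · subst h0
      simp only [pow_zero, one_mul]
      have hyL0 : 0 ≤ y L := le_trans (hlo0 0) hyLlo
      rcases le_total (x L) (-(k/2)) with hxneg | hxpos
      · calc k/2 ≤ y L - x L := by linarith
          _ ≤ |x L - y L| := by rw [abs_sub_comm]; exact le_abs_self _
          _ ≤ ‖x - y‖ := hcoordxy L
      · set A := ∑ i ∈ Finset.univ.erase L, (x i)^2 with hAdef
        set B := ∑ i ∈ Finset.univ.erase L, (y i)^2 with hBdef
        set S := ∑ i ∈ Finset.univ.erase L, (x i * y i) with hSdef
        have hA0 : 0 ≤ A := Finset.sum_nonneg fun _ _ => sq_nonneg _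
        have hB0 : 0 ≤ B := Finset.sum_nonneg fun _ _ => sq_nonneg _
        have hCS : S^2 ≤ A * B :=
          Finset.sum_mul_sq_le_sq_mul_sq (Finset.univ.erase L) (fun i => x i) (fun i => y i)
        have hxnorm : k^2 ≤ ‖x‖^2 := by
          have := pow_le_pow_left₀ hk0.le hxk 2
          linarith
        have hxsplit : ‖x‖^2 = (x L)^2 + A := by
          rw [stmt7_norm_sq_eq x, hAdef, ← Finset.add_sum_erase _ _ (Finset.mem_univ L)]
        have hxL2 : (x L)^2 ≤ (k/2)^2 := sq_le_sq' (by linarith) hxL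
        have hk24 : (k/2)^2 = k^2/4 := by ring
        have hAk : 3*(k^2)/4 ≤ A := by linarith
        have hBk : B ≤ k^2/16 := by
          have hb1 : B ≤ γ^2*(2*k) := by
            have hb0 := hsq
            norm_num at hb0
            linarith
          nlinarith [hkγ, hk0, hγ, sq_nonneg γ]
        have herase : ∑ i ∈ Finset.univ.erase L, (x i - y i)^2 = A - 2*S + B := by
          rw [hAdef, hBdef, hSdef, Finset.mul_sum, ← Finset.sum_sub_distrib,
            ← Finset.sum_add_distrib]
          exact Finset.sum_congr rfl fun i _ => by ring
        have hsum : A - 2*S + B ≤ ∑ i, (x i - y i)^2 := by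
          rw [← herase]
          exact Finset.sum_le_sum_of_subset_of_nonneg (Finset.erase_subset _ _)
            (fun _ _ _ => sq_nonneg _)
        have h2S : 2*S ≤ A/2 + 2*B := by
          rcases le_or_gt S 0 with hS0 | hS0
          · linarith
          · have hsq' : (2*S)^2 ≤ (A/2+2*B)^2 := by
              nlinarith [hCS, sq_nonneg (A/2 - 2*B)]
            nlinarith [hsq', show (0:ℝ) < A/2+2*B+2*S from by linarith]
        have hq2 : (k/2)^2 ≤ ‖x - y‖^2 := by
          rw [stmt7_norm_sq_eq (x - y)]
          have : ∑ i, ((x - y) i)^2 = ∑ i, (x i - y i)^2 :=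
            Finset.sum_congr rfl fun i _ => by simp [PiLp.sub_apply]
          rw [this]
          linarith
        calc k/2 = Real.sqrt ((k/2)^2) := (Real.sqrt_sq (by positivity)).symm
          _ ≤ Real.sqrt (‖x - y‖^2) := Real.sqrt_le_sqrt hq2
          _ = ‖x - y‖ := Real.sqrt_sq (norm_nonneg _)
    · have hne : j ≠ 0 := by omega
      have hlo : lo j = 2^j * k := by rw [hlodef]; simp [hne]
      have h2j : (1:ℝ) ≤ 2^j := by
        calc (1:ℝ) = 2^0 := by norm_num
          _ ≤ 2^j := pow_le_pow_right₀ one_le_two (Nat.zero_le j)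
      have hyL : 2^j * k ≤ y L := by rw [← hlo]; exact hyLlo
      calc 2^j * k/2 ≤ y L - x L := by nlinarith
        _ ≤ |x L - y L| := by rw [abs_sub_comm]; exact le_abs_self _
        _ ≤ ‖x - y‖ := hcoordxy L
  -- rewrite kernel as inverse of natural power
  have hker : ∀ y : EuclideanSpace ℝ (Fin N),
      ‖x - y‖ ^ ((2:ℝ) - N) = ((‖x - y‖^(N-2:ℕ))⁻¹ : ℝ) := by
    intro y
    rcases eq_or_ne (‖x - y‖) 0 with h0 | hne
    · rw [h0, Real.zero_rpow (ne_of_lt (by linarith : (2:ℝ) - N < 0)),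
        zero_pow (by omega), inv_zero]
    · have hcast : ((2:ℝ) - N) = -((N - 2 : ℕ) : ℝ) := by
        rw [Nat.cast_sub (by omega)]; push_cast; ring
      rw [hcast, Real.rpow_neg (norm_nonneg _), Real.rpow_natCast]
  -- piecewise lintegral bound
  have hpiece : ∀ j : ℕ, (∫⁻ y in Q j, ENNReal.ofReal (‖x - y‖ ^ ((2:ℝ) - N))) ≤
      ENNReal.ofReal (C * q^j * (Real.sqrt k)⁻¹) := by
    intro j
    set s := Real.sqrt (2^j * k) with hsdef
    have hs2 : s^2 = 2^j*k := Real.sq_sqrt (by positivity)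
    have h2jk : (1:ℝ) ≤ 2^j * k := by
      have h2j : (1:ℝ) ≤ 2^j := by
        calc (1:ℝ) = 2^0 := by norm_num
          _ ≤ 2^j := pow_le_pow_right₀ one_le_two (Nat.zero_le j)
      nlinarith
    have hs1 : 1 ≤ s := by
      rw [hsdef, show (1:ℝ) = Real.sqrt 1 by simp]
      exact Real.sqrt_le_sqrt h2jk
    have hs0 : 0 < s := by linarith
    have hd0 : 0 < s^2/2 := by positivity
    have hpb : ∀ y ∈ Q j, ENNReal.ofReal (‖x - y‖ ^ ((2:ℝ) - N)) ≤
        ENNReal.ofReal (((s^2/2)^(N-2:ℕ))⁻¹) := by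
      intro y hy
      apply ENNReal.ofReal_le_ofReal
      rw [hker y]
      have hdy : s^2/2 ≤ ‖x - y‖ := by
        rw [hs2]; exact hdist j y hy
      have := pow_le_pow_left₀ hd0.le hdy (N-2)
      exact inv_anti₀ (by positivity) this
    have hQsub : Q j ⊆ {y : EuclideanSpace ℝ (Fin N) |
        ∀ i, y i ∈ Icc (if i = L then 0 else -(r j)) (if i = L then 2^(j+1)*k else r j)} := by
      intro y hy i
      obtain ⟨h1, _, h3⟩ := hy
      by_cases hi : i = L
      · subst hi
        simp only [if_pos rfl]
        exact ⟨le_trans (hlo0 j) h3.1, h3.2⟩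
      · simp only [if_neg hi]
        exact abs_le.mp (h1 i hi)
    have hcard : (Finset.univ.erase L).card = N - 1 := by
      rw [Finset.card_erase_of_mem (Finset.mem_univ L), Finset.card_univ, Fintype.card_fin]
    have hvol : volume (Q j) ≤
        ENNReal.ofReal ((2*(r j))^((N-2)+1) * (2*s^2)) := by
      refine le_trans (measure_mono hQsub) ?_
      rw [stmt7_volume_box]
      rw [← Finset.mul_prod_erase Finset.univ _ (Finset.mem_univ L)]
      have hprod : (∏ i ∈ Finset.univ.erase L, ENNReal.ofReal
          ((if i = L then 2^(j+1)*k else r j) - (if i = L then 0 else -(r j)))) =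
          ENNReal.ofReal (2*(r j))^((N-2)+1) := by
        rw [Finset.prod_congr rfl (fun i hi => ?_), Finset.prod_const, hcard]
        · congr 1; omega
        · rw [if_neg (Finset.mem_erase.mp hi).1, if_neg (Finset.mem_erase.mp hi).1]
          congr 1; ring
      rw [hprod]
      have hif : ((if L = L then 2^(j+1)*k else r j) - (if L = L then 0 else -(r j)))
          = 2*s^2 := by
        rw [if_pos rfl, if_pos rfl, sub_zero, hs2]; ring
      rw [hif, ENNReal.ofReal_mul (pow_nonneg (by linarith [hr0 j]) _),
        ENNReal.ofReal_pow (by linarith [hr0 j])]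
      exact le_of_eq (mul_comm _ _)
    calc (∫⁻ y in Q j, ENNReal.ofReal (‖x - y‖ ^ ((2:ℝ) - N)))
        ≤ ∫⁻ _ in Q j, ENNReal.ofReal (((s^2/2)^(N-2:ℕ))⁻¹) := setLIntegral_mono measurable_const hpb
      _ = ENNReal.ofReal (((s^2/2)^(N-2:ℕ))⁻¹) * volume (Q j) := setLIntegral_const _ _
      _ ≤ ENNReal.ofReal (((s^2/2)^(N-2:ℕ))⁻¹) *
            ENNReal.ofReal ((2*(r j))^((N-2)+1) * (2*s^2)) := mul_le_mul_right hvol _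
      _ = ENNReal.ofReal (((s^2/2)^(N-2:ℕ))⁻¹ * ((2*(r j))^((N-2)+1) * (2*s^2))) :=
            (ENNReal.ofReal_mul (by positivity)).symm
      _ ≤ ENNReal.ofReal (C * q^j * (Real.sqrt k)⁻¹) := by
          apply ENNReal.ofReal_le_ofReal
          have hrs : r j = γ * (Real.sqrt 2 * s) := by
            rw [hrdef]; dsimp only
            rw [hsdef, ← Real.sqrt_mul (by norm_num : (0:ℝ) ≤ 2)]
            congr 2; ring
          have h2r : 2*(r j) = 2*γ*(Real.sqrt 2*s) := by rw [hrs]; ring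
          rw [h2r]
          refine le_trans (stmt7_key_bound (N-2) (by omega) γ s hγ hs1) ?_
          have hsinv : s⁻¹ = q^j * (Real.sqrt k)⁻¹ := by
            rw [hsdef, Real.sqrt_mul (by positivity), stmt7_sqrt_two_pow j, mul_inv,
              hqdef, inv_pow]
          rw [← hCdef, hsinv, ← mul_assoc]
  -- total lintegral bound
  have hq1 : q < 1 := by
    rw [hqdef]
    have h12 : 1 < Real.sqrt 2 := by
      rw [show (1:ℝ) = Real.sqrt 1 by simp]
      exact Real.sqrt_lt_sqrt (by norm_num) (by norm_num)
    exact inv_lt_one_of_one_lt₀ h12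
  have hPQle : (∫⁻ y in P, ENNReal.ofReal (‖x - y‖ ^ ((2:ℝ) - N))) ≤
      ENNReal.ofReal ((4*C) * (Real.sqrt k)⁻¹) := by
    refine le_trans (lintegral_mono_set hcover) (le_trans (lintegral_iUnion_le _ _) ?_)
    refine le_trans (ENNReal.tsum_le_tsum hpiece) ?_
    have hfun : (fun j : ℕ => C * q^j * (Real.sqrt k)⁻¹) =
        fun j => (C * (Real.sqrt k)⁻¹) * q^j := by funext j; ring
    have hsummable : Summable (fun j : ℕ => C * q^j * (Real.sqrt k)⁻¹) := by
      rw [hfun]; exact (summable_geometric_of_lt_one hq0 hq1).mul_left _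
    rw [← ENNReal.ofReal_tsum_of_nonneg (fun j => by positivity) hsummable]
    apply ENNReal.ofReal_le_ofReal
    have ht : (∑' j:ℕ, C * q^j * (Real.sqrt k)⁻¹) =
        (C * (Real.sqrt k)⁻¹) * (1-q)⁻¹ := by
      rw [hfun, tsum_mul_left, tsum_geometric_of_lt_one hq0 hq1]
    rw [ht]
    have hq34 : q ≤ 3/4 := by
      rw [hqdef]
      have hsq2 := Real.sq_sqrt (by norm_num : (0:ℝ) ≤ 2)
      have h43 : (4/3:ℝ) ≤ Real.sqrt 2 := by nlinarith [Real.sqrt_nonneg 2]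
      have h2pos : (0:ℝ) < Real.sqrt 2 := by positivity
      rw [inv_le_comm₀ h2pos (by norm_num)]
      linarith
    have h4 : (1-q)⁻¹ ≤ 4 := by
      rw [show (4:ℝ) = (1/4)⁻¹ by norm_num]
      exact inv_anti₀ (by norm_num) (by linarith)
    have hCk : 0 ≤ C * (Real.sqrt k)⁻¹ := by positivity
    nlinarith
  -- conclude
  have hnonneg : 0 ≤ᵐ[volume.restrict P] fun y => ‖x - y‖ ^ ((2:ℝ) - N) :=
    ae_of_all _ fun y => Real.rpow_nonneg (norm_nonneg _) _
  have hmeas : AEStronglyMeasurable (fun y => ‖x - y‖ ^ ((2:ℝ) - N)) (volume.restrict P) := by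
    have heq : (fun y : EuclideanSpace ℝ (Fin N) => ‖x - y‖ ^ ((2:ℝ) - N)) =
        fun y => (‖x - y‖^(N-2:ℕ))⁻¹ := funext hker
    rw [heq]
    exact (((measurable_const.sub measurable_id).norm.pow_const _).inv).aestronglyMeasurable
  rw [hV x, integral_eq_lintegral_of_nonneg_ae hnonneg hmeas]
  have hI : (∫⁻ y in P, ENNReal.ofReal (‖x - y‖ ^ ((2:ℝ) - N))).toReal ≤
      (4*C) * (Real.sqrt k)⁻¹ :=
    ENNReal.toReal_le_of_le_ofReal (by positivity) hPQle
  have hsk0 : 0 < Real.sqrt k := Real.sqrt_pos.mpr hk0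
  have hfin : αN * ((4*C) * (Real.sqrt k)⁻¹) ≤ ε := by
    rw [div_le_iff₀ hε] at hsqk
    calc αN * ((4*C)*(Real.sqrt k)⁻¹) = (αN*(4*C))/Real.sqrt k := by ring
      _ ≤ ε := by rw [div_le_iff₀ hsk0]; nlinarith
  calc αN * (∫⁻ y in P, ENNReal.ofReal (‖x - y‖ ^ ((2:ℝ) - N))).toReal
      ≤ αN * ((4*C) * (Real.sqrt k)⁻¹) := mul_le_mul_of_nonneg_left hI hα0
    _ ≤ ε := hfin
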